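/- Let U, V be finite-dimensional real inner product spaces, p : U → ℝ ∪ {+∞} and q : V → ℝ ∪ {+∞} proper closed convex, and h : U × V → ℝ convex differentiable satisfying the two-sided quadratic bounds h(w') + ⟨∇h(w'), w-w'⟩ + (1/2)‖w-w'‖²_Q ≤ h(w) ≤ h(w') + ⟨∇h(w'), w-w'⟩ + (1/2)‖w-w'‖²_{Q̂} for all w, w', with Q̂ = Q + Diag(D₁, D₂) for self-adjoint positive semidefinite D₁, D₂ and block-positive-definite diagonal blocks Q̂₁₁, Q̂₂₂. Given a point w^k = (u^k, v^k), let ũ minimize p(u) + ĥ(u, v^k; w^k) over u, and ṽ minimize q(v) + ĥ(ũ, v; w^k) over v, where ĥ(w; w^k) is the quadratic majorant. Then with 𝓗 = Diag(D₁, D₂ + Q₂₂) and w̃ = (ũ, ṽ): θ(w̃) - θ(w) ≤ (1/2)‖w - w^k‖²_𝓗 - (1/2)‖w - w̃‖²_𝓗 for all w ∈ U × V, where θ(w) = h(w) + p(u) + q(v). -/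

import Mathlib

private lemma t_trick {c Δ : ℝ} (hc : 0 ≤ c) (hΔ : 0 ≤ Δ)
    (h : ∀ t : ℝ, 0 < t → t < 1 → (1 - t) / 2 * c ≤ Δ) : c / 2 ≤ Δ := by
  by_contra hlt
  push_neg at hlt
  have hcpos : 0 < c := by nlinarith
  set t := (c / 2 - Δ) / c with ht
  have ht0 : 0 < t := div_pos (by linarith) hcpos
  have ht1 : t < 1 := by rw [ht, div_lt_one hcpos]; linarith
  have htc : t * c = c / 2 - Δ := div_mul_cancel₀ _ (ne_of_gt hcpos)
  have := h t ht0 ht1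
  nlinarith

private lemma strong_min {E : Type*} [NormedAddCommGroup E] [NormedSpace ℝ E]
    (p : E → ℝ) (hp : ConvexOn ℝ Set.univ p)
    (φ : E → ℝ) (B : E → ℝ) (hB : ∀ d, 0 ≤ B d)
    (hφ : ∀ x y : E, ∀ t : ℝ, 0 < t → t < 1 →
      φ ((1 - t) • x + t • y) = φ x + t * (φ y - φ x) - t * (1 - t) / 2 * B (y - x))
    (x0 : E) (hmin : ∀ u, p x0 + φ x0 ≤ p u + φ u) :
    ∀ u, p x0 + φ x0 + 1 / 2 * B (u - x0) ≤ p u + φ u := by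
  intro u
  have hΔ : 0 ≤ (p u + φ u) - (p x0 + φ x0) := by linarith [hmin u]
  have key : ∀ t : ℝ, 0 < t → t < 1 →
      (1 - t) / 2 * B (u - x0) ≤ (p u + φ u) - (p x0 + φ x0) := by
    intro t ht0 ht1
    have hconv := hp.2 (Set.mem_univ x0) (Set.mem_univ u)
      (by linarith : (0:ℝ) ≤ 1 - t) (le_of_lt ht0) (by ring)
    simp only [smul_eq_mul] at hconv
    have hmint := hmin ((1 - t) • x0 + t • u)
    have hφt := hφ x0 u t ht0 ht1
    have h2 : t * ((1 - t) / 2 * B (u - x0)) ≤ t * ((p u + φ u) - (p x0 + φ x0)) := by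
      nlinarith
    exact (mul_le_mul_iff_right₀ ht0).mp h2
  linarith [t_trick (hB (u - x0)) hΔ key]

private lemma quad_expand {E : Type*} [NormedAddCommGroup E] [InnerProductSpace ℝ E]
    (A : E →ₗ[ℝ] E) (hA : ∀ x y : E, (inner ℝ (A x) y : ℝ) = inner ℝ x (A y))
    (a d : E) (t : ℝ) :
    (inner ℝ (a + t • d) (A (a + t • d)) : ℝ)
      = inner ℝ a (A a) + 2 * t * (inner ℝ d (A a) : ℝ) + t ^ 2 * inner ℝ d (A d) := by
  have key : (inner ℝ a (A d) : ℝ) = inner ℝ d (A a) := by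
    rw [real_inner_comm]; exact hA d a
  simp only [map_add, map_smul, inner_add_left, inner_add_right,
    real_inner_smul_left, real_inner_smul_right]
  linear_combination t * key

private lemma quad_combo {E : Type*} [NormedAddCommGroup E] [InnerProductSpace ℝ E]
    (A : E →ₗ[ℝ] E) (hA : ∀ x y : E, (inner ℝ (A x) y : ℝ) = inner ℝ x (A y))
    (z x y : E) (t : ℝ) :
    (inner ℝ ((1 - t) • x + t • y - z) (A ((1 - t) • x + t • y - z)) : ℝ)
      = inner ℝ (x - z) (A (x - z))
        + t * ((inner ℝ (y - z) (A (y - z)) : ℝ) - inner ℝ (x - z) (A (x - z)))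
        - t * (1 - t) * inner ℝ (y - x) (A (y - x)) := by
  have hv : (1 - t) • x + t • y - z = (x - z) + t • (y - x) := by module
  have hv1 : y - z = (x - z) + (1 : ℝ) • (y - x) := by module
  rw [hv, hv1, quad_expand A hA, quad_expand A hA]
  ring


/-- Lemma 2: one-cycle sufficient descent of the exact majorized two-block
coordinate descent method. The inner ℝ product on `U × V` is the componentwise
sum; `𝓗 = Diag(D₁, D₂ + Q₂₂)`. -/
theorem mABCD_one_cycle_descent
    {U V : Type*} [NormedAddCommGroup U] [InnerProductSpace ℝ U] [FiniteDimensional ℝ U]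
    [NormedAddCommGroup V] [InnerProductSpace ℝ V] [FiniteDimensional ℝ V]
    -- the nonsmooth blocks
    (p : U → ℝ) (hpconv : ConvexOn ℝ Set.univ p) (hplsc : LowerSemicontinuous p)
    (q : V → ℝ) (hqconv : ConvexOn ℝ Set.univ q) (hqlsc : LowerSemicontinuous q)
    -- the smooth coupled function and its gradient
    (h : U × V → ℝ) (hconv : ConvexOn ℝ Set.univ h)
    (g : U × V → U × V)
    (hgrad : ∀ w : U × V, HasFDerivAt h
      (((innerSL ℝ (g w).1).comp (ContinuousLinearMap.fst ℝ U V))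
        + ((innerSL ℝ (g w).2).comp (ContinuousLinearMap.snd ℝ U V))) w)
    -- the blocks of Q and the proximal blocks D₁, D₂
    (Q11 : U →ₗ[ℝ] U) (Q12 : V →ₗ[ℝ] U) (Q12s : U →ₗ[ℝ] V) (Q22 : V →ₗ[ℝ] V)
    (D1 : U →ₗ[ℝ] U) (D2 : V →ₗ[ℝ] V)
    (hQ11sa : ∀ x y : U, (inner ℝ (Q11 x) y : ℝ) = inner ℝ x (Q11 y))
    (hQ11psd : ∀ x : U, 0 ≤ (inner ℝ x (Q11 x) : ℝ))
    (hQ22sa : ∀ x y : V, (inner ℝ (Q22 x) y : ℝ) = inner ℝ x (Q22 y))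
    (hQ22psd : ∀ x : V, 0 ≤ (inner ℝ x (Q22 x) : ℝ))
    (hadj : ∀ (x : U) (y : V), (inner ℝ (Q12 y) x : ℝ) = inner ℝ y (Q12s x))
    (hD1sa : ∀ x y : U, (inner ℝ (D1 x) y : ℝ) = inner ℝ x (D1 y))
    (hD1psd : ∀ x : U, 0 ≤ (inner ℝ x (D1 x) : ℝ))
    (hD2sa : ∀ x y : V, (inner ℝ (D2 x) y : ℝ) = inner ℝ x (D2 y))
    (hD2psd : ∀ x : V, 0 ≤ (inner ℝ x (D2 x) : ℝ))
    -- the quadratic forms of Q and Q̂ = Q + Diag(D₁, D₂)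
    (quadQ quadQhat : U × V → ℝ)
    (hquadQ : ∀ w : U × V, quadQ w
      = (inner ℝ w.1 (Q11 w.1) : ℝ) + (inner ℝ w.1 (Q12 w.2) : ℝ)
        + (inner ℝ w.2 (Q12s w.1) : ℝ) + (inner ℝ w.2 (Q22 w.2) : ℝ))
    (hquadQhat : ∀ w : U × V, quadQhat w
      = quadQ w + (inner ℝ w.1 (D1 w.1) : ℝ) + (inner ℝ w.2 (D2 w.2) : ℝ))
    -- Q positive semidefinite, Q̂₁₁ ≻ 0, Q̂₂₂ ≻ 0
    (hQpsd : ∀ w : U × V, 0 ≤ quadQ w)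
    (hQ11hatpd : ∀ x : U, x ≠ 0 → 0 < (inner ℝ x (Q11 x) : ℝ) + (inner ℝ x (D1 x) : ℝ))
    (hQ22hatpd : ∀ x : V, x ≠ 0 → 0 < (inner ℝ x (Q22 x) : ℝ) + (inner ℝ x (D2 x) : ℝ))
    -- the two-sided quadratic bounds (6)
    (hlower : ∀ w w' : U × V,
      h w' + ((inner ℝ (g w').1 (w.1 - w'.1) : ℝ) + (inner ℝ (g w').2 (w.2 - w'.2) : ℝ))
        + 1 / 2 * quadQ (w - w') ≤ h w)
    (hupper : ∀ w w' : U × V,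
      h w ≤ h w' + ((inner ℝ (g w').1 (w.1 - w'.1) : ℝ) + (inner ℝ (g w').2 (w.2 - w'.2) : ℝ))
        + 1 / 2 * quadQhat (w - w'))
    -- the current point and the quadratic majorant ĥ(·; w^k)
    (wk : U × V)
    (hhat : U × V → ℝ)
    (hhhat : ∀ w : U × V, hhat w
      = h wk + ((inner ℝ (g wk).1 (w.1 - wk.1) : ℝ) + (inner ℝ (g wk).2 (w.2 - wk.2) : ℝ))
        + 1 / 2 * quadQhat (w - wk))
    -- the exact block minimizers of the majorized subproblems
    (ut : U) (vt : V)
    (hut : ∀ u : U, p ut + hhat (ut, wk.2) ≤ p u + hhat (u, wk.2))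
    (hvt : ∀ v : V, q vt + hhat (ut, vt) ≤ q v + hhat (ut, v)) :
    -- conclusion: sufficient descent in the 𝓗 = Diag(D₁, D₂ + Q₂₂) seminorm
    ∀ w : U × V,
      (h (ut, vt) + p ut + q vt) - (h w + p w.1 + q w.2)
        ≤ 1 / 2 * ((inner ℝ (w.1 - wk.1) (D1 (w.1 - wk.1)) : ℝ)
              + (inner ℝ (w.2 - wk.2) (D2 (w.2 - wk.2)) : ℝ)
              + (inner ℝ (w.2 - wk.2) (Q22 (w.2 - wk.2)) : ℝ))
          - 1 / 2 * ((inner ℝ (w.1 - ut) (D1 (w.1 - ut)) : ℝ)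
              + (inner ℝ (w.2 - vt) (D2 (w.2 - vt)) : ℝ)
              + (inner ℝ (w.2 - vt) (Q22 (w.2 - vt)) : ℝ)) := by

  obtain ⟨uk, vk⟩ := wk
  -- general expansion of hhat
  have F : ∀ (x : U) (y : V), hhat (x, y)
      = h (uk, vk) + ((inner ℝ (g (uk, vk)).1 (x - uk) : ℝ) + (inner ℝ (g (uk, vk)).2 (y - vk) : ℝ))
        + 1 / 2 * ((inner ℝ (x - uk) (Q11 (x - uk)) : ℝ)
            + (inner ℝ (x - uk) (Q12 (y - vk)) : ℝ)
            + (inner ℝ (y - vk) (Q12s (x - uk)) : ℝ)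
            + (inner ℝ (y - vk) (Q22 (y - vk)) : ℝ)
            + (inner ℝ (x - uk) (D1 (x - uk)) : ℝ)
            + (inner ℝ (y - vk) (D2 (y - vk)) : ℝ)) := by
    intro x y
    rw [hhhat, hquadQhat, hquadQ]
    simp only [Prod.fst_sub, Prod.snd_sub]
  -- Step 1: strong minimality in u
  have F1 : ∀ u : U, hhat (u, vk) = h (uk, vk) + (inner ℝ (g (uk, vk)).1 (u - uk) : ℝ)
      + 1 / 2 * ((inner ℝ (u - uk) (Q11 (u - uk)) : ℝ) + (inner ℝ (u - uk) (D1 (u - uk)) : ℝ)) := by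
    intro u
    rw [F]
    simp only [sub_self, map_zero, inner_zero_left, inner_zero_right]
    ring
  have FactA : ∀ u : U, p ut + hhat (ut, vk)
      + 1 / 2 * ((inner ℝ (u - ut) (Q11 (u - ut)) : ℝ) + (inner ℝ (u - ut) (D1 (u - ut)) : ℝ))
      ≤ p u + hhat (u, vk) := by
    have hφ : ∀ x y : U, ∀ t : ℝ, 0 < t → t < 1 →
        (fun u => hhat (u, vk)) ((1 - t) • x + t • y)
          = hhat (x, vk) + t * (hhat (y, vk) - hhat (x, vk))
            - t * (1 - t) / 2 * ((inner ℝ (y - x) (Q11 (y - x)) : ℝ)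
                + (inner ℝ (y - x) (D1 (y - x)) : ℝ)) := by
      intro x y t _ _
      simp only [F1]
      have lin : (inner ℝ (g (uk, vk)).1 ((1 - t) • x + t • y - uk) : ℝ)
          = inner ℝ (g (uk, vk)).1 (x - uk)
            + t * ((inner ℝ (g (uk, vk)).1 (y - uk) : ℝ) - inner ℝ (g (uk, vk)).1 (x - uk)) := by
        rw [show (1 - t) • x + t • y - uk = (x - uk) + t • (y - x) from by module,
          show y - uk = (x - uk) + (y - x) from by abel,
          inner_add_right, inner_add_right, real_inner_smul_right]
        ring
      rw [lin, quad_combo Q11 hQ11sa uk x y t, quad_combo D1 hD1sa uk x y t]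
      ring
    have := strong_min p hpconv (fun u => hhat (u, vk))
      (fun d => (inner ℝ d (Q11 d) : ℝ) + (inner ℝ d (D1 d) : ℝ))
      (fun d => add_nonneg (hQ11psd d) (hD1psd d)) hφ ut (by simpa using hut)
    simpa using this
  -- Step 2: strong minimality in v
  have FactB : ∀ v : V, q vt + hhat (ut, vt)
      + 1 / 2 * ((inner ℝ (v - vt) (Q22 (v - vt)) : ℝ) + (inner ℝ (v - vt) (D2 (v - vt)) : ℝ))
      ≤ q v + hhat (ut, v) := by
    have hφ : ∀ x y : V, ∀ t : ℝ, 0 < t → t < 1 →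
        (fun v => hhat (ut, v)) ((1 - t) • x + t • y)
          = hhat (ut, x) + t * (hhat (ut, y) - hhat (ut, x))
            - t * (1 - t) / 2 * ((inner ℝ (y - x) (Q22 (y - x)) : ℝ)
                + (inner ℝ (y - x) (D2 (y - x)) : ℝ)) := by
      intro x y t _ _
      simp only [F]
      have hv : (1 - t) • x + t • y - vk = (x - vk) + t • (y - x) := by module
      have hv1 : y - vk = (x - vk) + (y - x) := by abel
      have lin2 : (inner ℝ (g (uk, vk)).2 ((1 - t) • x + t • y - vk) : ℝ)
          = inner ℝ (g (uk, vk)).2 (x - vk)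
            + t * ((inner ℝ (g (uk, vk)).2 (y - vk) : ℝ) - inner ℝ (g (uk, vk)).2 (x - vk)) := by
        rw [hv, hv1, inner_add_right, inner_add_right, real_inner_smul_right]; ring
      have lin3 : (inner ℝ (ut - uk) (Q12 ((1 - t) • x + t • y - vk)) : ℝ)
          = inner ℝ (ut - uk) (Q12 (x - vk))
            + t * ((inner ℝ (ut - uk) (Q12 (y - vk)) : ℝ) - inner ℝ (ut - uk) (Q12 (x - vk))) := by
        rw [hv, hv1, map_add, map_add, map_smul, inner_add_right, inner_add_right,
          real_inner_smul_right]
        ring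
      have lin4 : (inner ℝ ((1 - t) • x + t • y - vk) (Q12s (ut - uk)) : ℝ)
          = inner ℝ (x - vk) (Q12s (ut - uk))
            + t * ((inner ℝ (y - vk) (Q12s (ut - uk)) : ℝ) - inner ℝ (x - vk) (Q12s (ut - uk))) := by
        rw [hv, hv1, inner_add_left, inner_add_left, real_inner_smul_left]; ring
      rw [lin2, lin3, lin4, quad_combo Q22 hQ22sa vk x y t, quad_combo D2 hD2sa vk x y t]
      ring
    have := strong_min q hqconv (fun v => hhat (ut, v))
      (fun d => (inner ℝ d (Q22 d) : ℝ) + (inner ℝ d (D2 d) : ℝ))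
      (fun d => add_nonneg (hQ22psd d) (hD2psd d)) hφ vt (by simpa using hvt)
    simpa using this
  intro w
  -- upper bound at the new point
  have Hup : h (ut, vt) ≤ hhat (ut, vt) := by
    rw [hhhat]; exact hupper (ut, vt) (uk, vk)
  -- lower bound at w
  have Hlo : hhat (w.1, w.2) ≤ h w
      + 1 / 2 * ((inner ℝ (w.1 - uk) (D1 (w.1 - uk)) : ℝ)
          + (inner ℝ (w.2 - vk) (D2 (w.2 - vk)) : ℝ)) := by
    have hl := hlower (w.1, w.2) (uk, vk)
    rw [hhhat, hquadQhat]
    simp only [Prod.fst_sub, Prod.snd_sub, Prod.mk.eta] at hl ⊢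
    linarith
  -- the exchange identity
  have key6 : hhat (ut, w.2) + hhat (w.1, vk)
      = hhat (w.1, w.2) + hhat (ut, vk)
        + (inner ℝ (w.2 - vk) (Q12s (ut - w.1)) : ℝ) := by
    have c1 : (inner ℝ (ut - uk) (Q12 (w.2 - vk)) : ℝ) = inner ℝ (w.2 - vk) (Q12s (ut - uk)) := by
      rw [real_inner_comm]; exact hadj _ _
    have c2 : (inner ℝ (w.1 - uk) (Q12 (w.2 - vk)) : ℝ) = inner ℝ (w.2 - vk) (Q12s (w.1 - uk)) := by
      rw [real_inner_comm]; exact hadj _ _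
    have c3 : (inner ℝ (w.2 - vk) (Q12s (ut - w.1)) : ℝ)
        = inner ℝ (w.2 - vk) (Q12s (ut - uk)) - inner ℝ (w.2 - vk) (Q12s (w.1 - uk)) := by
      rw [show ut - w.1 = (ut - uk) - (w.1 - uk) from by abel, map_sub, inner_sub_right]
    rw [F, F, F, F]
    simp only [sub_self, map_zero, inner_zero_left, inner_zero_right]
    linear_combination (1/2) * c1 - (1/2) * c2 - c3
  -- the cross-term bound from Q ⪰ 0
  have Cross : (inner ℝ (w.2 - vk) (Q12s (ut - w.1)) : ℝ)
      ≤ 1 / 2 * (inner ℝ (ut - w.1) (Q11 (ut - w.1)) : ℝ)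
        + 1 / 2 * (inner ℝ (w.2 - vk) (Q22 (w.2 - vk)) : ℝ) := by
    have hp0 := hQpsd (ut - w.1, -(w.2 - vk))
    rw [hquadQ] at hp0
    simp only [map_neg, inner_neg_left, inner_neg_right, inner_neg_neg] at hp0
    have hc : (inner ℝ (ut - w.1) (Q12 (w.2 - vk)) : ℝ) = inner ℝ (w.2 - vk) (Q12s (ut - w.1)) := by
      rw [real_inner_comm]; exact hadj _ _
    linarith
  have flip : (inner ℝ (w.1 - ut) (Q11 (w.1 - ut)) : ℝ) = inner ℝ (ut - w.1) (Q11 (ut - w.1)) := by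
    rw [← neg_sub ut w.1, map_neg, inner_neg_neg]
  have A' := FactA w.1
  have B' := FactB w.2
  have hw : h (w.1, w.2) = h w := by rw [Prod.mk.eta]
  simp only [Prod.mk.eta] at Hlo
  linarith
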